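/- Existence of the minimal circumscribed ellipse and Euler's remarkable property: let p₁, p₂, p₃ ∈ ℝ² be affinely independent points. Then there exist real numbers A, B, C, D, E, F with A > 0 and A·C − B² > 0 such that Q(x,y) = A·x² + 2B·x·y + C·y² + 2D·x + 2E·y + F vanishes at p₁, p₂, p₃, the two-dimensional Lebesgue measure of {(x,y) ∈ ℝ² : Q(x,y) ≤ 0} equals (4π/(3·√3)) · (1/2)·|det(p₂ − p₁, p₃ − p₁)|, and the gradient of Q vanishes exactly at the centroid (p₁ + p₂ + p₃)/3 (i.e. the centre of this minimal-area ellipse is the centre of gravity of the triangle). -/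

import Mathlib

open MeasureTheory Pointwise

lemma volume_disk : volume {u : ℝ × ℝ | u.1 ^ 2 + u.2 ^ 2 ≤ 1} = ENNReal.ofReal Real.pi := by
  have hmeas : MeasurableSet {u : ℝ × ℝ | u.1 ^ 2 + u.2 ^ 2 ≤ 1} := by
    apply measurableSet_le <;> fun_prop
  have hpre : Complex.measurableEquivRealProd ⁻¹' {u : ℝ × ℝ | u.1 ^ 2 + u.2 ^ 2 ≤ 1}
      = Metric.closedBall (0 : ℂ) 1 := by
    ext z
    simp only [Set.mem_preimage, Complex.measurableEquivRealProd_apply, Set.mem_setOf_eq,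
      Metric.mem_closedBall, Complex.dist_eq, sub_zero]
    rw [← pow_le_one_iff_of_nonneg (norm_nonneg z) two_ne_zero, Complex.sq_norm,
      Complex.normSq_apply]
    constructor <;> intro h <;> nlinarith
  have := Complex.volume_preserving_equiv_real_prod.measure_preimage hmeas.nullMeasurableSet
  rw [hpre] at this
  rw [← this, Complex.volume_closedBall]
  rw [← NNReal.coe_real_pi, ENNReal.ofReal_coe_nnreal]
  simp

lemma volume_affine_image (a₁ b₁ a₂ b₂ g₁ g₂ : ℝ) (s : Set (ℝ × ℝ)) :
    volume ((fun u : ℝ × ℝ => (a₁ * u.1 + b₁ * u.2 + g₁, a₂ * u.1 + b₂ * u.2 + g₂)) '' s)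
      = ENNReal.ofReal |a₁ * b₂ - a₂ * b₁| * volume s := by
  set L : (ℝ × ℝ) →ₗ[ℝ] (ℝ × ℝ) :=
    { toFun := fun u => (a₁ * u.1 + b₁ * u.2, a₂ * u.1 + b₂ * u.2)
      map_add' := by intro u v; ext <;> simp <;> ring
      map_smul' := by intro c u; ext <;> simp <;> ring } with hL
  have hdet : LinearMap.det L = a₁ * b₂ - a₂ * b₁ := by
    rw [← LinearMap.det_toMatrix (Module.Basis.finTwoProd ℝ), Matrix.det_fin_two]
    simp [LinearMap.toMatrix_apply, Module.Basis.finTwoProd_zero, Module.Basis.finTwoProd_one, hL,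
      Module.Basis.coe_finTwoProd_repr]
    ring
  have himg : (fun u : ℝ × ℝ => (a₁ * u.1 + b₁ * u.2 + g₁, a₂ * u.1 + b₂ * u.2 + g₂)) '' s
      = (g₁, g₂) +ᵥ (⇑L '' s) := by
    rw [← Set.image_vadd, ← Set.image_comp]
    apply Set.image_congr'
    intro u
    show _ = (g₁, g₂) + _
    simp [hL, Prod.ext_iff]; constructor <;> ring
  rw [himg, measure_vadd, Measure.addHaar_image_linearMap, hdet]

lemma ellipse_eq_image (a₁ a₂ c₁ c₂ g₁ g₂ s : ℝ) (hs2 : s ^ 2 = 3)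
    (hk : a₁ * c₂ - a₂ * c₁ ≠ 0) :
    {p : ℝ × ℝ | 3 * (a₂ * (p.1 - g₁) - a₁ * (p.2 - g₂)) ^ 2
        + (c₂ * (p.1 - g₁) - c₁ * (p.2 - g₂)) ^ 2 - (a₁ * c₂ - a₂ * c₁) ^ 2 ≤ 0}
      = (fun u : ℝ × ℝ => (a₁ * u.1 + c₁ * s / 3 * u.2 + g₁, a₂ * u.1 + c₂ * s / 3 * u.2 + g₂))
          '' {u : ℝ × ℝ | u.1 ^ 2 + u.2 ^ 2 ≤ 1} := by
  have hk2 : (0:ℝ) < (a₁ * c₂ - a₂ * c₁) ^ 2 := by positivity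
  ext ⟨x, y⟩
  simp only [Set.mem_setOf_eq, Set.mem_image, Prod.mk.injEq, Prod.exists]
  constructor
  · intro h
    refine ⟨(c₂ * (x - g₁) - c₁ * (y - g₂)) / (a₁ * c₂ - a₂ * c₁),
      s * (a₁ * (y - g₂) - a₂ * (x - g₁)) / (a₁ * c₂ - a₂ * c₁), ?_, ?_, ?_⟩
    · have h1 : (s * (a₁ * (y - g₂) - a₂ * (x - g₁)) / (a₁ * c₂ - a₂ * c₁)) ^ 2
          = 3 * (a₁ * (y - g₂) - a₂ * (x - g₁)) ^ 2 / (a₁ * c₂ - a₂ * c₁) ^ 2 := by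
        rw [div_pow, mul_pow, hs2]
      rw [h1, div_pow, ← add_div, div_le_one hk2]
      nlinarith [h]
    · have e1 : c₁ * s / 3 * (s * (a₁ * (y - g₂) - a₂ * (x - g₁)) / (a₁ * c₂ - a₂ * c₁))
          = c₁ * (a₁ * (y - g₂) - a₂ * (x - g₁)) / (a₁ * c₂ - a₂ * c₁) := by
        rw [show c₁ * s / 3 * (s * (a₁ * (y - g₂) - a₂ * (x - g₁)) / (a₁ * c₂ - a₂ * c₁))
            = s ^ 2 * (c₁ * (a₁ * (y - g₂) - a₂ * (x - g₁))) / 3 / (a₁ * c₂ - a₂ * c₁)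
            from by ring, hs2, mul_div_cancel_left₀ _ (three_ne_zero (α := ℝ))]
      rw [e1, show a₁ * ((c₂ * (x - g₁) - c₁ * (y - g₂)) / (a₁ * c₂ - a₂ * c₁))
          = a₁ * (c₂ * (x - g₁) - c₁ * (y - g₂)) / (a₁ * c₂ - a₂ * c₁) from
          (mul_div_assoc _ _ _).symm, ← add_div,
        show a₁ * (c₂ * (x - g₁) - c₁ * (y - g₂)) + c₁ * (a₁ * (y - g₂) - a₂ * (x - g₁))
          = (a₁ * c₂ - a₂ * c₁) * (x - g₁) from by ring, mul_div_cancel_left₀ _ hk]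
      ring
    · have e1 : c₂ * s / 3 * (s * (a₁ * (y - g₂) - a₂ * (x - g₁)) / (a₁ * c₂ - a₂ * c₁))
          = c₂ * (a₁ * (y - g₂) - a₂ * (x - g₁)) / (a₁ * c₂ - a₂ * c₁) := by
        rw [show c₂ * s / 3 * (s * (a₁ * (y - g₂) - a₂ * (x - g₁)) / (a₁ * c₂ - a₂ * c₁))
            = s ^ 2 * (c₂ * (a₁ * (y - g₂) - a₂ * (x - g₁))) / 3 / (a₁ * c₂ - a₂ * c₁)
            from by ring, hs2, mul_div_cancel_left₀ _ (three_ne_zero (α := ℝ))]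
      rw [e1, show a₂ * ((c₂ * (x - g₁) - c₁ * (y - g₂)) / (a₁ * c₂ - a₂ * c₁))
          = a₂ * (c₂ * (x - g₁) - c₁ * (y - g₂)) / (a₁ * c₂ - a₂ * c₁) from
          (mul_div_assoc _ _ _).symm, ← add_div,
        show a₂ * (c₂ * (x - g₁) - c₁ * (y - g₂)) + c₂ * (a₁ * (y - g₂) - a₂ * (x - g₁))
          = (a₁ * c₂ - a₂ * c₁) * (y - g₂) from by ring, mul_div_cancel_left₀ _ hk]
      ring
  · rintro ⟨u₁, u₂, hu, hx, hy⟩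
    subst hx hy
    have hval : 3 * (a₂ * (a₁ * u₁ + c₁ * s / 3 * u₂ + g₁ - g₁)
          - a₁ * (a₂ * u₁ + c₂ * s / 3 * u₂ + g₂ - g₂)) ^ 2
        + (c₂ * (a₁ * u₁ + c₁ * s / 3 * u₂ + g₁ - g₁)
          - c₁ * (a₂ * u₁ + c₂ * s / 3 * u₂ + g₂ - g₂)) ^ 2 - (a₁ * c₂ - a₂ * c₁) ^ 2
        = (a₁ * c₂ - a₂ * c₁) ^ 2 * (u₁ ^ 2 + u₂ ^ 2) - (a₁ * c₂ - a₂ * c₁) ^ 2 := by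
      linear_combination ((a₁ * c₂ - a₂ * c₁) ^ 2 * u₂ ^ 2 / 3) * hs2
    rw [hval]
    nlinarith [hu, hk2]

lemma det_ne_zero_of_affInd (p₁ p₂ p₃ : ℝ × ℝ) (hind : AffineIndependent ℝ ![p₁, p₂, p₃]) :
    (p₂.1 - p₁.1) * (p₃.2 - p₁.2) - (p₂.2 - p₁.2) * (p₃.1 - p₁.1) ≠ 0 := by
  intro hT
  by_cases hv : (p₂.1 - p₁.1) ^ 2 + (p₂.2 - p₁.2) ^ 2 = 0
  · have e1 : (p₂.1 - p₁.1) ^ 2 = 0 :=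
      le_antisymm (by nlinarith [sq_nonneg (p₂.2 - p₁.2)]) (sq_nonneg _)
    have e2 : (p₂.2 - p₁.2) ^ 2 = 0 :=
      le_antisymm (by nlinarith [sq_nonneg (p₂.1 - p₁.1)]) (sq_nonneg _)
    have h1 : p₂.1 = p₁.1 := by
      have := (pow_eq_zero_iff two_ne_zero).mp e1; linarith [sub_eq_zero.mp this]
    have h2 : p₂.2 = p₁.2 := by
      have := (pow_eq_zero_iff two_ne_zero).mp e2; linarith [sub_eq_zero.mp this]
    have : (0 : Fin 3) = 1 := hind.injective (by
      show p₁ = p₂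
      exact Prod.ext h1.symm h2.symm)
    simp at this
  · set t : ℝ := ((p₂.1 - p₁.1) * (p₃.1 - p₁.1) + (p₂.2 - p₁.2) * (p₃.2 - p₁.2))
      / ((p₂.1 - p₁.1) ^ 2 + (p₂.2 - p₁.2) ^ 2) with ht
    have := affineIndependent_iff.mp hind Finset.univ ![t - 1, -t, 1] (by
      simp [Fin.sum_univ_three]; ring) (by
      rw [Fin.sum_univ_three]
      simp only [Matrix.cons_val_zero, Matrix.cons_val_one, Matrix.head_cons,
        Matrix.cons_val_two, Matrix.tail_cons]
      apply Prod.ext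
      · simp only [Prod.fst_add, Prod.smul_fst, smul_eq_mul, Prod.fst_zero, ht]
        field_simp
        linear_combination (-(p₂.2 - p₁.2)) * hT
      · simp only [Prod.snd_add, Prod.smul_snd, smul_eq_mul, Prod.snd_zero, ht]
        field_simp
        linear_combination (p₂.1 - p₁.1) * hT) 2 (Finset.mem_univ _)
    simp at this

/-- E692: existence of the minimal-area ellipse through three affinely independent
points `p₁, p₂, p₃`: there is an ellipse through the three points whose area is
exactly `(4π/(3√3))` times the area of the triangle, and whose centre (the unique
zero of the gradient of its quadratic equation) is the centroid `(p₁+p₂+p₃)/3`. -/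
theorem euler_minimal_ellipse_exists_centroid (p₁ p₂ p₃ : ℝ × ℝ)
    (hind : AffineIndependent ℝ ![p₁, p₂, p₃]) :
    ∃ A B C D E F : ℝ, 0 < A ∧ 0 < A * C - B ^ 2 ∧
      (A * p₁.1 ^ 2 + 2 * B * p₁.1 * p₁.2 + C * p₁.2 ^ 2
        + 2 * D * p₁.1 + 2 * E * p₁.2 + F = 0) ∧
      (A * p₂.1 ^ 2 + 2 * B * p₂.1 * p₂.2 + C * p₂.2 ^ 2
        + 2 * D * p₂.1 + 2 * E * p₂.2 + F = 0) ∧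
      (A * p₃.1 ^ 2 + 2 * B * p₃.1 * p₃.2 + C * p₃.2 ^ 2
        + 2 * D * p₃.1 + 2 * E * p₃.2 + F = 0) ∧
      MeasureTheory.volume
          {p : ℝ × ℝ | A * p.1 ^ 2 + 2 * B * p.1 * p.2 + C * p.2 ^ 2
            + 2 * D * p.1 + 2 * E * p.2 + F ≤ 0}
        = ENNReal.ofReal ((4 * Real.pi / (3 * Real.sqrt 3)) *
            ((1 : ℝ) / 2 *
              |(p₂.1 - p₁.1) * (p₃.2 - p₁.2) - (p₂.2 - p₁.2) * (p₃.1 - p₁.1)|)) ∧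
      (∀ x y : ℝ,
        (2 * A * x + 2 * B * y + 2 * D = 0 ∧ 2 * B * x + 2 * C * y + 2 * E = 0) ↔
          (x = (p₁.1 + p₂.1 + p₃.1) / 3 ∧ y = (p₁.2 + p₂.2 + p₃.2) / 3)) := by
  have hT := det_ne_zero_of_affInd p₁ p₂ p₃ hind
  set g₁ := (p₁.1 + p₂.1 + p₃.1) / 3 with hg₁
  set g₂ := (p₁.2 + p₂.2 + p₃.2) / 3 with hg₂
  set a₁ := p₁.1 - g₁ with ha₁
  set a₂ := p₁.2 - g₂ with ha₂
  set c₁ := p₂.1 - p₃.1 with hc₁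
  set c₂ := p₂.2 - p₃.2 with hc₂
  set k := a₁ * c₂ - a₂ * c₁ with hk
  have hkraw : a₁ * c₂ - a₂ * c₁ ≠ 0 := by
    simp only [ha₁, ha₂, hc₁, hc₂, hg₁, hg₂]
    intro h
    exact hT (by linear_combination (3/2 : ℝ) * h)
  have hk0 : k ≠ 0 := by rw [hk]; exact hkraw
  set A := 3 * a₂ ^ 2 + c₂ ^ 2 with hA
  set B := -(3 * a₁ * a₂ + c₁ * c₂) with hB
  set C := 3 * a₁ ^ 2 + c₁ ^ 2 with hC
  set D := -(A * g₁ + B * g₂) with hD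
  set E := -(B * g₁ + C * g₂) with hE
  set F := A * g₁ ^ 2 + 2 * B * g₁ * g₂ + C * g₂ ^ 2 - k ^ 2 with hF
  have h3k : A * C - B ^ 2 = 3 * k ^ 2 := by simp only [hA, hB, hC, hk]; ring
  have hk2pos : (0:ℝ) < k ^ 2 := lt_of_le_of_ne (sq_nonneg k) (Ne.symm (pow_ne_zero 2 hk0))
  refine ⟨A, B, C, D, E, F, ?_, ?_, ?_, ?_, ?_, ?_, ?_⟩
  · have hA0 : 0 ≤ A := by rw [hA]; positivity
    rcases hA0.lt_or_eq with h | h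
    · exact h
    · exfalso
      apply hk0
      rw [hA] at h
      have e2 : a₂ ^ 2 = 0 :=
        le_antisymm (by nlinarith [sq_nonneg c₂]) (sq_nonneg _)
      have e4 : c₂ ^ 2 = 0 :=
        le_antisymm (by nlinarith [sq_nonneg a₂]) (sq_nonneg _)
      rw [hk, (pow_eq_zero_iff two_ne_zero).mp e2, (pow_eq_zero_iff two_ne_zero).mp e4]
      ring
  · rw [h3k]; linarith
  · simp only [hA, hB, hC, hD, hE, hF, hk, ha₁, ha₂, hc₁, hc₂, hg₁, hg₂]; ring
  · simp only [hA, hB, hC, hD, hE, hF, hk, ha₁, ha₂, hc₁, hc₂, hg₁, hg₂]; ring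
  · simp only [hA, hB, hC, hD, hE, hF, hk, ha₁, ha₂, hc₁, hc₂, hg₁, hg₂]; ring
  · have hid : ∀ u v : ℝ, A * u ^ 2 + 2 * B * u * v + C * v ^ 2 + 2 * D * u + 2 * E * v + F
        = 3 * (a₂ * (u - g₁) - a₁ * (v - g₂)) ^ 2
          + (c₂ * (u - g₁) - c₁ * (v - g₂)) ^ 2 - (a₁ * c₂ - a₂ * c₁) ^ 2 := by
      intro u v
      simp only [hA, hB, hC, hD, hE, hF, hk]; ring
    have hset : {p : ℝ × ℝ | A * p.1 ^ 2 + 2 * B * p.1 * p.2 + C * p.2 ^ 2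
          + 2 * D * p.1 + 2 * E * p.2 + F ≤ 0}
        = {p : ℝ × ℝ | 3 * (a₂ * (p.1 - g₁) - a₁ * (p.2 - g₂)) ^ 2
            + (c₂ * (p.1 - g₁) - c₁ * (p.2 - g₂)) ^ 2 - (a₁ * c₂ - a₂ * c₁) ^ 2 ≤ 0} := by
      ext q
      simp only [Set.mem_setOf_eq, hid q.1 q.2]
    have hs2 : Real.sqrt 3 ^ 2 = 3 := Real.sq_sqrt (by norm_num)
    rw [hset, ellipse_eq_image a₁ a₂ c₁ c₂ g₁ g₂ (Real.sqrt 3) hs2 hkraw,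
      volume_affine_image, volume_disk, ← ENNReal.ofReal_mul (abs_nonneg _)]
    congr 1
    have habs : |a₁ * (c₂ * Real.sqrt 3 / 3) - a₂ * (c₁ * Real.sqrt 3 / 3)|
        = Real.sqrt 3 * (2/9)
          * |(p₂.1 - p₁.1) * (p₃.2 - p₁.2) - (p₂.2 - p₁.2) * (p₃.1 - p₁.1)| := by
      rw [show a₁ * (c₂ * Real.sqrt 3 / 3) - a₂ * (c₁ * Real.sqrt 3 / 3)
          = (Real.sqrt 3 * (2/9))
            * ((p₂.1 - p₁.1) * (p₃.2 - p₁.2) - (p₂.2 - p₁.2) * (p₃.1 - p₁.1)) from by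
          simp only [ha₁, ha₂, hc₁, hc₂, hg₁, hg₂]; ring,
        abs_mul, abs_of_pos (by positivity : (0:ℝ) < Real.sqrt 3 * (2/9))]
    rw [habs]
    have key : Real.sqrt 3 * (2/9) * Real.pi = 4 * Real.pi / (3 * Real.sqrt 3) * (1/2) := by
      rw [div_mul_eq_mul_div, eq_div_iff (by positivity : (3:ℝ) * Real.sqrt 3 ≠ 0)]
      linear_combination (2/3 : ℝ) * Real.pi * hs2
    linear_combination |(p₂.1 - p₁.1) * (p₃.2 - p₁.2) - (p₂.2 - p₁.2) * (p₃.1 - p₁.1)| * key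
  · intro x y
    constructor
    · rintro ⟨h1, h2⟩
      simp only [hD, hE] at h1 h2
      have hx : (A * C - B ^ 2) * (x - g₁) = 0 := by
        linear_combination (C/2) * h1 - (B/2) * h2
      have hy : (A * C - B ^ 2) * (y - g₂) = 0 := by
        linear_combination (A/2) * h2 - (B/2) * h1
      have hne : A * C - B ^ 2 ≠ 0 := by
        rw [h3k]; exact mul_ne_zero three_ne_zero (pow_ne_zero 2 hk0)
      constructor
      · rcases mul_eq_zero.mp hx with h | h
        · exact absurd h hne
        · linarith [sub_eq_zero.mp h]
      · rcases mul_eq_zero.mp hy with h | h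
        · exact absurd h hne
        · linarith [sub_eq_zero.mp h]
    · rintro ⟨rfl, rfl⟩
      exact ⟨by simp only [hD]; ring, by simp only [hE]; ring⟩
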